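/- For every countable linear order A there is an order embedding e : A ↪ ℚ that is symmetric, i.e., for every order automorphism g of A there is an order automorphism ĝ of ℚ with ĝ ∘ e = e ∘ g. -/

import Mathlib

section aux

variable (A : Type*) [LinearOrder A]

instance : DenselyOrdered (A ×ₗ ℚ) := by
  constructor
  rintro ⟨a, q⟩ ⟨b, r⟩ h
  rcases Prod.Lex.lt_iff.1 h with h | ⟨rfl, h⟩
  · exact ⟨toLex (a, q + 1), Prod.Lex.lt_iff.2 (Or.inr ⟨rfl, show q < q + 1 by linarith⟩),
      Prod.Lex.lt_iff.2 (Or.inl h)⟩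
  · obtain ⟨m, hm1, hm2⟩ := exists_between h
    exact ⟨toLex (a, m), Prod.Lex.lt_iff.2 (Or.inr ⟨rfl, hm1⟩),
      Prod.Lex.lt_iff.2 (Or.inr ⟨rfl, hm2⟩)⟩

instance : NoMinOrder (A ×ₗ ℚ) := by
  constructor
  rintro ⟨a, q⟩
  have hq : q - 1 < q := by linarith
  exact ⟨toLex (a, q - 1), Prod.Lex.lt_iff.2 (Or.inr ⟨rfl, hq⟩)⟩

instance : NoMaxOrder (A ×ₗ ℚ) := by
  constructor
  rintro ⟨a, q⟩
  have hq : q < q + 1 := by linarith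
  exact ⟨toLex (a, q + 1), Prod.Lex.lt_iff.2 (Or.inr ⟨rfl, hq⟩)⟩

instance [Countable A] : Countable (A ×ₗ ℚ) := inferInstanceAs (Countable (A × ℚ))
instance [Nonempty A] : Nonempty (A ×ₗ ℚ) := inferInstanceAs (Nonempty (A × ℚ))

/-- The automorphism of `A ×ₗ ℚ` induced by an automorphism of `A`. -/
def lexCongr (g : A ≃o A) : (A ×ₗ ℚ) ≃o (A ×ₗ ℚ) where
  toFun p := toLex (g (ofLex p).1, (ofLex p).2)
  invFun p := toLex (g.symm (ofLex p).1, (ofLex p).2)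
  left_inv p := by simp
  right_inv p := by simp
  map_rel_iff' := by
    rintro ⟨a, q⟩ ⟨b, r⟩
    constructor
    · intro h
      rcases Prod.Lex.le_iff.1 h with h | ⟨h, h2⟩
      · exact Prod.Lex.le_iff.2 (Or.inl (g.lt_iff_lt.1 h))
      · exact Prod.Lex.le_iff.2 (Or.inr ⟨g.injective h, h2⟩)
    · intro h
      rcases Prod.Lex.le_iff.1 h with h | ⟨h, h2⟩
      · exact Prod.Lex.le_iff.2 (Or.inl (g.strictMono h))
      · exact Prod.Lex.le_iff.2 (Or.inr ⟨congrArg g h, h2⟩)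

end aux

theorem exists_symmetric_orderEmbedding_into_rat
    (A : Type*) [LinearOrder A] [Countable A] :
    ∃ e : A ↪o ℚ, ∀ g : A ≃o A, ∃ g' : ℚ ≃o ℚ, ∀ x, g' (e x) = e (g x) := by
  cases isEmpty_or_nonempty A with
  | inl h =>
    exact ⟨OrderEmbedding.ofStrictMono (fun a => isEmptyElim a) (fun a => isEmptyElim a),
      fun g => ⟨OrderIso.refl ℚ, fun x => isEmptyElim x⟩⟩
  | inr h =>
    obtain ⟨φ⟩ : Nonempty ((A ×ₗ ℚ) ≃o ℚ) := Order.iso_of_countable_dense _ _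
    let emb : A ↪o (A ×ₗ ℚ) := OrderEmbedding.ofStrictMono (fun a => toLex (a, 0))
      (fun a b hab => Prod.Lex.lt_iff.2 (Or.inl hab))
    refine ⟨emb.trans φ.toOrderEmbedding, fun g => ⟨((φ.symm.trans (lexCongr A g)).trans φ),
      fun x => ?_⟩⟩
    simp [lexCongr, emb, OrderEmbedding.ofStrictMono]
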